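/- Let (Ω, F, P) be a probability space, and let g : ℝ₊₊^N × Ω → ℝ₊₊ and h : ℝ₊₊^N → ℝ₊₊ be functions such that, for almost every ω ∈ Ω, the function x ↦ h(x)/g(x,ω) is an MSP function, and such that for every x ∈ ℝ₊₊^N the expectation E[g(x,ω)] is well defined, finite, and positive. Then for every α > 1 and every x ∈ ℝ₊₊^N, h(αx)/E[g(αx,ω)] < α · h(x)/E[g(x,ω)]; that is, the function f(x) = h(x)/E[g(x,ω)] is scalable. -/

import Mathlib

open MeasureTheory Filter

/-- The open positive cone in `ℝ^N`. -/
def PosCone (N : ℕ) : Set (Fin N → ℝ) := {x | ∀ i, 0 < x i}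

/-- A monotonic, scalable, and positive (MSP) function on the positive cone `ℝ₊₊^N`:
(0) it is positive on the cone, (i) monotone on the cone, (ii) scalable, and
(iii) its infimum over the cone is positive. -/
def IsMSPFun {N : ℕ} (f : (Fin N → ℝ) → ℝ) : Prop :=
  (∀ x : Fin N → ℝ, (∀ i, 0 < x i) → 0 < f x) ∧
  (∀ x y : Fin N → ℝ, (∀ i, 0 < x i) → (∀ i, 0 < y i) → x ≤ y → f x ≤ f y) ∧
  (∀ α : ℝ, 1 < α → ∀ x : Fin N → ℝ, (∀ i, 0 < x i) → f (α • x) < α * f x) ∧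
  0 < sInf (f '' PosCone N)

/-- An MSP mapping: every coordinate function is an MSP function. -/
def IsMSPMap {N : ℕ} (T : (Fin N → ℝ) → (Fin N → ℝ)) : Prop :=
  ∀ i, IsMSPFun (fun x => T x i)

/-- A monotone norm on `ℝ^N`: a genuine norm that is order-preserving on the
nonnegative cone. -/
def IsMonoNorm {N : ℕ} (nrm : (Fin N → ℝ) → ℝ) : Prop :=
  (∀ x : Fin N → ℝ, nrm x = 0 ↔ x = 0) ∧
  (∀ (a : ℝ) (x : Fin N → ℝ), nrm (a • x) = |a| * nrm x) ∧
  (∀ x y : Fin N → ℝ, nrm (x + y) ≤ nrm x + nrm y) ∧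
  (∀ x y : Fin N → ℝ, (∀ i, 0 ≤ x i) → (∀ i, 0 ≤ y i) → x ≤ y → nrm x ≤ nrm y)

/-- Scalability part of Proposition 2: if for almost every `ω` the function
`x ↦ h(x)/g(x,ω)` is an MSP function and `E[g(x,ω)]` is well defined, finite and
positive on the positive cone, then `x ↦ h(x)/E[g(x,ω)]` is scalable:
`h(αx)/E[g(αx,ω)] < α ⬝ h(x)/E[g(x,ω)]` for every `α > 1` and `x ∈ ℝ₊₊^N`. -/
theorem stmt7 {N : ℕ} {Ω : Type*} [MeasurableSpace Ω]
    (P : Measure Ω) [IsProbabilityMeasure P]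
    (g : (Fin N → ℝ) → Ω → ℝ) (h : (Fin N → ℝ) → ℝ)
    (hh : ∀ x : Fin N → ℝ, (∀ i, 0 < x i) → 0 < h x)
    (hgpos : ∀ᵐ ω ∂P, ∀ x : Fin N → ℝ, (∀ i, 0 < x i) → 0 < g x ω)
    (hMSP : ∀ᵐ ω ∂P, IsMSPFun (fun x => h x / g x ω))
    (hgint : ∀ x : Fin N → ℝ, (∀ i, 0 < x i) → Integrable (fun ω => g x ω) P)
    (hgintpos : ∀ x : Fin N → ℝ, (∀ i, 0 < x i) → 0 < ∫ ω, g x ω ∂P) :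
    ∀ α : ℝ, 1 < α → ∀ x : Fin N → ℝ, (∀ i, 0 < x i) →
      h (α • x) / ∫ ω, g (α • x) ω ∂P < α * (h x / ∫ ω, g x ω ∂P) := by
  intro α hα x hx
  have hα0 : (0:ℝ) < α := lt_trans one_pos hα
  have hax : ∀ i, 0 < (α • x) i := fun i => by
    simpa using mul_pos hα0 (hx i)
  -- pointwise a.e. strict inequality
  have key : ∀ᵐ ω ∂P, 0 < α * h x * g (α • x) ω - h (α • x) * g x ω := by
    filter_upwards [hgpos, hMSP] with ω hg hm
    have h1 := hm.2.2.1 α hα x hx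
    have hgx : 0 < g x ω := hg x hx
    have hgax : 0 < g (α • x) ω := hg (α • x) hax
    have h1' : h (α • x) / g (α • x) ω < (α * h x) / g x ω := by
      rw [mul_div_assoc]; exact h1
    have := (div_lt_div_iff₀ hgax hgx).mp h1'
    linarith
  set F : Ω → ℝ := fun ω => α * h x * g (α • x) ω - h (α • x) * g x ω with hF
  have hFint : Integrable F P :=
    ((hgint (α • x) hax).const_mul _).sub ((hgint x hx).const_mul _)
  have hpos : 0 < ∫ ω, F ω ∂P := by
    rw [integral_pos_iff_support_of_nonneg_ae (key.mono fun ω hω => le_of_lt hω) hFint]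
    by_contra h0
    push_neg at h0
    have h0' : P (Function.support F) = 0 := le_antisymm h0 zero_le
    have hz : ∀ᵐ ω ∂P, F ω = 0 := by
      rw [ae_iff]
      exact measure_mono_null (fun ω hω => hω) h0'
    obtain ⟨ω, h1, h2⟩ := (key.and hz).exists
    exact absurd h2 (ne_of_gt h1)
  have hint : h (α • x) * ∫ ω, g x ω ∂P < α * h x * ∫ ω, g (α • x) ω ∂P := by
    have : ∫ ω, F ω ∂P = α * h x * (∫ ω, g (α • x) ω ∂P) - h (α • x) * ∫ ω, g x ω ∂P := by
      rw [hF, integral_sub ((hgint (α • x) hax).const_mul _) ((hgint x hx).const_mul _),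
        MeasureTheory.integral_const_mul, MeasureTheory.integral_const_mul]
    linarith [this ▸ hpos]
  have hA := hgintpos (α • x) hax
  have hB := hgintpos x hx
  rw [div_lt_iff₀ hA,
    show α * (h x / ∫ ω, g x ω ∂P) * ∫ ω, g (α • x) ω ∂P
      = (α * h x * ∫ ω, g (α • x) ω ∂P) / ∫ ω, g x ω ∂P by ring,
    lt_div_iff₀ hB]
  linarith
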